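/- Let κ be a nonzero complex number, set h = 3/(4κ), and let U = {z ∈ ℂ : 0 < |z| < 1} \ (−1, 0]. Suppose φ : ℂ → ℂ is complex differentiable on U with derivative complex differentiable on U, and satisfies κ²·z·(1−z)·φ″(z) + κ·(κ+1)·(1−2z)·φ′(z) − (2κ + 3/(4·z·(1−z)))·φ(z) = 0 for all z ∈ U. Define f(z) = z^{2h}·(1−z)^{2h}·φ(z), where complex powers are taken with the principal branch. Then f is twice complex differentiable on U and satisfies the hypergeometric-type equation κ²·z·(1−z)·f″(z) + κ·(κ−2)·(1−2z)·f′(z) + (κ−3)·f(z) = 0 for all z ∈ U. -/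

import Mathlib

open Complex

/-- The slit punctured unit disk `{z ∈ ℂ : 0 < |z| < 1} \ (−1, 0]`. -/
def slitDisk : Set ℂ :=
  {z : ℂ | 0 < ‖z‖ ∧ ‖z‖ < 1} \
    {z : ℂ | z.im = 0 ∧ z.re ∈ Set.Ioc (-1 : ℝ) 0}

lemma slitDisk_eq : slitDisk = {z : ℂ | ‖z‖ < 1} \
    {z : ℂ | z.im = 0 ∧ z.re ∈ Set.Icc (-1 : ℝ) 0} := by
  ext z
  simp only [slitDisk, Set.mem_diff, Set.mem_setOf_eq, Set.mem_Ioc, Set.mem_Icc]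
  constructor
  · rintro ⟨⟨h0, h1⟩, hs⟩
    refine ⟨h1, fun h => ?_⟩
    obtain ⟨him, hre1, hre2⟩ := h
    rcases eq_or_lt_of_le hre1 with h | h
    · have : ‖z‖ = 1 := by
        have hz : z = (-1 : ℂ) := by
          apply Complex.ext <;> simp [← h, him]
        simp [hz]
      linarith
    · exact hs ⟨him, h, hre2⟩
  · rintro ⟨h1, hs⟩
    refine ⟨⟨?_, h1⟩, fun h => hs ⟨h.1, le_of_lt h.2.1, h.2.2⟩⟩
    rcases eq_or_lt_of_le (norm_nonneg z) with h | h
    · exfalso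
      have hz : z = 0 := by
        simpa using (norm_eq_zero.mp h.symm)
      exact hs (by simp [hz])
    · exact h

lemma slitDisk_open : IsOpen slitDisk := by
  rw [slitDisk_eq]
  apply IsOpen.sdiff
  · exact isOpen_lt (continuous_norm) continuous_const
  · exact ((isClosed_eq Complex.continuous_im continuous_const).inter
      (isClosed_Icc.preimage Complex.continuous_re))

lemma slitDisk_ne_zero {z : ℂ} (hz : z ∈ slitDisk) : z ≠ 0 := by
  intro h
  exact (by simpa [h] using hz.1.1 : (0:ℝ) < 0).false

lemma slitDisk_mem_slitPlane {z : ℂ} (hz : z ∈ slitDisk) : z ∈ slitPlane := by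
  rw [Complex.mem_slitPlane_iff]
  by_contra h
  push_neg at h
  obtain ⟨hre, him⟩ := h
  apply hz.2
  refine ⟨him, ?_, hre⟩
  have h1 : |z.re| < 1 := lt_of_le_of_lt (Complex.abs_re_le_norm z) hz.1.2
  cases abs_lt.mp h1; linarith

lemma slitDisk_one_sub_mem {z : ℂ} (hz : z ∈ slitDisk) : (1 - z) ∈ slitPlane := by
  rw [Complex.mem_slitPlane_iff]
  left
  have : z.re < 1 := lt_of_le_of_lt (le_trans (le_abs_self _) (Complex.abs_re_le_norm z)) hz.1.2
  simp only [Complex.sub_re, Complex.one_re]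
  linarith

lemma slitDisk_one_sub_ne {z : ℂ} (hz : z ∈ slitDisk) : (1:ℂ) - z ≠ 0 :=
  Complex.slitPlane_ne_zero (slitDisk_one_sub_mem hz)

/-- **Section 3.1, equation (3.10) → (3.12).** If `φ` satisfies the second-order ODE
`κ²z(1−z)φ″ + κ(κ+1)(1−2z)φ′ − (2κ + 3/(4z(1−z)))φ = 0` on the slit disk, then
`f(z) = z^{2h}(1−z)^{2h}φ(z)` with `h = 3/(4κ)` (principal branch powers) is twice
holomorphic on the slit disk and satisfies the hypergeometric-type equation
`κ²z(1−z)f″ + κ(κ−2)(1−2z)f′ + (κ−3)f = 0`. -/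
theorem hypergeometric_substitution_two (κ : ℂ) (hκ : κ ≠ 0) (φ : ℂ → ℂ)
    (hd : ∀ z ∈ slitDisk, DifferentiableAt ℂ φ z)
    (hd' : ∀ z ∈ slitDisk, DifferentiableAt ℂ (deriv φ) z)
    (ode : ∀ z ∈ slitDisk, κ ^ 2 * z * (1 - z) * deriv (deriv φ) z
        + κ * (κ + 1) * (1 - 2 * z) * deriv φ z
        - (2 * κ + 3 / (4 * z * (1 - z))) * φ z = 0)
    (f : ℂ → ℂ)
    (hf : f = fun z => z ^ (2 * (3 / (4 * κ))) * (1 - z) ^ (2 * (3 / (4 * κ))) * φ z) :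
    (∀ z ∈ slitDisk, DifferentiableAt ℂ f z) ∧
    (∀ z ∈ slitDisk, DifferentiableAt ℂ (deriv f) z) ∧
    (∀ z ∈ slitDisk, κ ^ 2 * z * (1 - z) * deriv (deriv f) z
        + κ * (κ - 2) * (1 - 2 * z) * deriv f z
        + (κ - 3) * f z = 0) := by
  set a : ℂ := 2 * (3 / (4 * κ)) with ha
  set f1 : ℂ → ℂ := fun w => (a * w ^ (a - 1) * (1 - w) ^ a
      + w ^ a * (a * (1 - w) ^ (a - 1) * (-1))) * φ w
      + w ^ a * (1 - w) ^ a * deriv φ w with hf1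
  have hG : ∀ z ∈ slitDisk, HasDerivAt f (f1 z) z := by
    intro z hz
    have hA : HasDerivAt (fun w : ℂ => w ^ a) (a * z ^ (a - 1)) z :=
      (Complex.hasStrictDerivAt_cpow_const (slitDisk_mem_slitPlane hz)).hasDerivAt
    have hB : HasDerivAt (fun w : ℂ => (1 - w) ^ a) (a * (1 - z) ^ (a - 1) * (-1)) z :=
      ((hasDerivAt_id z).const_sub 1).cpow_const (slitDisk_one_sub_mem hz)
    rw [hf]
    exact (hA.mul hB).mul ((hd z hz).hasDerivAt)
  have key : ∀ z ∈ slitDisk, HasDerivAt (deriv f)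
      ((((a * ((a - 1) * z ^ (a - 1 - 1)) * (1 - z) ^ a
            + a * z ^ (a - 1) * (a * (1 - z) ^ (a - 1) * (-1)))
          + ((a * z ^ (a - 1)) * (a * (1 - z) ^ (a - 1) * (-1))
            + z ^ a * (a * ((a - 1) * (1 - z) ^ (a - 1 - 1) * (-1)) * (-1)))) * φ z
          + (a * z ^ (a - 1) * (1 - z) ^ a + z ^ a * (a * (1 - z) ^ (a - 1) * (-1))) * deriv φ z)
        + ((a * z ^ (a - 1) * (1 - z) ^ a + z ^ a * (a * (1 - z) ^ (a - 1) * (-1))) * deriv φ z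
          + z ^ a * (1 - z) ^ a * deriv (deriv φ) z)) z := by
    intro z hz
    have hzs := slitDisk_mem_slitPlane hz
    have h1s := slitDisk_one_sub_mem hz
    have hz0 := slitDisk_ne_zero hz
    have hz1 := slitDisk_one_sub_ne hz
    have heq : deriv f =ᶠ[nhds z] f1 :=
      Filter.eventuallyEq_of_mem (slitDisk_open.mem_nhds hz) (fun w hw => (hG w hw).deriv)
    have hA : HasDerivAt (fun w : ℂ => w ^ a) (a * z ^ (a - 1)) z :=
      (Complex.hasStrictDerivAt_cpow_const hzs).hasDerivAt
    have hB : HasDerivAt (fun w : ℂ => (1 - w) ^ a) (a * (1 - z) ^ (a - 1) * (-1)) z :=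
      ((hasDerivAt_id z).const_sub 1).cpow_const h1s
    have hA1 : HasDerivAt (fun w : ℂ => w ^ (a - 1)) ((a - 1) * z ^ (a - 1 - 1)) z :=
      (Complex.hasStrictDerivAt_cpow_const hzs).hasDerivAt
    have hB1 : HasDerivAt (fun w : ℂ => (1 - w) ^ (a - 1)) ((a - 1) * (1 - z) ^ (a - 1 - 1) * (-1)) z :=
      ((hasDerivAt_id z).const_sub 1).cpow_const h1s
    have h2 : HasDerivAt f1
        ((((a * ((a - 1) * z ^ (a - 1 - 1)) * (1 - z) ^ a
            + a * z ^ (a - 1) * (a * (1 - z) ^ (a - 1) * (-1)))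
          + ((a * z ^ (a - 1)) * (a * (1 - z) ^ (a - 1) * (-1))
            + z ^ a * (a * ((a - 1) * (1 - z) ^ (a - 1 - 1) * (-1)) * (-1)))) * φ z
          + (a * z ^ (a - 1) * (1 - z) ^ a + z ^ a * (a * (1 - z) ^ (a - 1) * (-1))) * deriv φ z)
        + ((a * z ^ (a - 1) * (1 - z) ^ a + z ^ a * (a * (1 - z) ^ (a - 1) * (-1))) * deriv φ z
          + z ^ a * (1 - z) ^ a * deriv (deriv φ) z)) z := by
      exact ((((hA1.const_mul a).mul hB).add
        (hA.mul ((hB1.const_mul a).mul_const (-1)))).mul ((hd z hz).hasDerivAt)).add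
        ((hA.mul hB).mul ((hd' z hz).hasDerivAt))
    exact h2.congr_of_eventuallyEq heq
  refine ⟨fun z hz => (hG z hz).differentiableAt,
    fun z hz => (key z hz).differentiableAt, ?_⟩
  intro z hz
  have hz0 := slitDisk_ne_zero hz
  have hz1 := slitDisk_one_sub_ne hz
  rw [(key z hz).deriv, (hG z hz).deriv, hf]
  simp only [hf1]
  have m2 : z ^ (a - 1) = z ^ (a - 1 - 1) * z := by
    conv_lhs => rw [show a - 1 = (a - 1 - 1) + 1 by ring]
    rw [Complex.cpow_add _ _ hz0, Complex.cpow_one]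
  have m1 : z ^ a = z ^ (a - 1 - 1) * z * z := by
    conv_lhs => rw [show a = (a - 1) + 1 by ring]
    rw [Complex.cpow_add _ _ hz0, Complex.cpow_one, m2]
  have m4 : (1 - z) ^ (a - 1) = (1 - z) ^ (a - 1 - 1) * (1 - z) := by
    conv_lhs => rw [show a - 1 = (a - 1 - 1) + 1 by ring]
    rw [Complex.cpow_add _ _ hz1, Complex.cpow_one]
  have m3 : (1 - z) ^ a = (1 - z) ^ (a - 1 - 1) * (1 - z) * (1 - z) := by
    conv_lhs => rw [show a = (a - 1) + 1 by ring]
    rw [Complex.cpow_add _ _ hz1, Complex.cpow_one, m4]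
  rw [m1, m2, m3, m4]
  have key2 := ode z hz
  set A := z ^ (a - 1 - 1)
  set B := (1 - z) ^ (a - 1 - 1)
  rw [ha]
  field_simp at key2 ⊢
  linear_combination (4 * z * (1 - z) * A * B) * key2
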